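/- Let V be a binary linear code of length 7 and dimension 3 in which every nonzero codeword has weight 4 (i.e. V is a Hamming-type code). Then the map assigning to each coordinate index i in {1,...,7} the vector of values of some fixed basis of the dual evaluations realizes a bijection between {1,...,7} and the nonzero vectors of F_2^3, under which three indices i_1, i_2, i_3 have the property that some nonzero codeword vanishes at all three if and only if the corresponding vectors of F_2^3 are linearly dependent. -/

import Mathlib

/-- The weight of a binary word: the number of nonzero coordinates. -/
def codeWeight {n : ℕ} (v : Fin n → ZMod 2) : ℕ :=
  (Finset.univ.filter fun i => v i ≠ 0).card

open Finset Matrix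

/-- Dependence of three vectors in `F_2^3` is equivalent to existence of a nonzero
orthogonal vector. -/
lemma dep_iff_ortho (x y z : Fin 3 → ZMod 2) :
    (¬ LinearIndependent (ZMod 2) ![x, y, z]) ↔
    ∃ c : Fin 3 → ZMod 2, c ≠ 0 ∧ (∑ k, c k * x k = 0) ∧ (∑ k, c k * y k = 0) ∧
      (∑ k, c k * z k = 0) := by
  classical
  set A : Matrix (Fin 3) (Fin 3) (ZMod 2) := Matrix.of ![x, y, z] with hA
  have key : ∀ g : Fin 3 → ZMod 2, g ᵥ* A = ∑ i, g i • ![x, y, z] i := by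
    intro g
    funext j
    simp [Matrix.vecMul, dotProduct, Finset.sum_apply, hA]
  have h1 : (¬ LinearIndependent (ZMod 2) ![x, y, z]) ↔ ∃ g ≠ (0 : Fin 3 → ZMod 2), g ᵥ* A = 0 := by
    rw [Fintype.not_linearIndependent_iff]
    constructor
    · rintro ⟨g, hg, k, hk⟩
      exact ⟨g, fun h => hk (by simp [h]), by rw [key]; exact hg⟩
    · rintro ⟨g, hg, hgA⟩
      refine ⟨g, by rw [← key]; exact hgA, ?_⟩
      by_contra h
      push_neg at h
      exact hg (funext h)
  have h2 : (∃ g ≠ (0 : Fin 3 → ZMod 2), g ᵥ* A = 0) ↔ A.det = 0 :=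
    Matrix.exists_vecMul_eq_zero_iff
  have h3 : A.det = 0 ↔ ∃ c ≠ (0 : Fin 3 → ZMod 2), A *ᵥ c = 0 :=
    Matrix.exists_mulVec_eq_zero_iff.symm
  rw [h1, h2, h3]
  constructor
  · rintro ⟨c, hc, hAc⟩
    refine ⟨c, hc, ?_, ?_, ?_⟩
    · have := congrFun hAc 0
      simpa [hA, Matrix.mulVec, dotProduct, mul_comm] using this
    · have := congrFun hAc 1
      simpa [hA, Matrix.mulVec, dotProduct, mul_comm] using this
    · have := congrFun hAc 2
      simpa [hA, Matrix.mulVec, dotProduct, mul_comm] using this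
  · rintro ⟨c, hc, h1, h2, h3⟩
    refine ⟨c, hc, ?_⟩
    funext j
    fin_cases j <;>
      simp [hA, Matrix.mulVec, dotProduct] <;>
      [exact (Finset.sum_congr rfl fun k _ => mul_comm _ _).trans h1;
       exact (Finset.sum_congr rfl fun k _ => mul_comm _ _).trans h2;
       exact (Finset.sum_congr rfl fun k _ => mul_comm _ _).trans h3]

/-- Two distinct nonzero codewords of an all-weight-4 code in `F_2^7` cannot both vanish
at two common coordinates. -/
lemma core_no_two (V : Submodule (ZMod 2) (Fin 7 → ZMod 2))
    (hweight : ∀ v ∈ V, v ≠ 0 → codeWeight v = 4)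
    {i j : Fin 7} (hij : i ≠ j) {a b : Fin 7 → ZMod 2}
    (ha : a ∈ V) (hb : b ∈ V) (ha0 : a ≠ 0) (hb0 : b ≠ 0) (hab : a ≠ b)
    (hai : a i = 0) (haj : a j = 0) (hbi : b i = 0) (hbj : b j = 0) : False := by
  classical
  set A : Finset (Fin 7) := Finset.univ.filter (fun t => a t ≠ 0) with hAdef
  set B : Finset (Fin 7) := Finset.univ.filter (fun t => b t ≠ 0) with hBdef
  have hA : A.card = 4 := hweight a ha ha0
  have hB : B.card = 4 := hweight b hb hb0
  have hab0 : a + b ≠ 0 := by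
    intro h
    apply hab
    funext t
    have ht : a t + b t = 0 := congrFun h t
    revert ht
    generalize a t = p
    generalize b t = q
    revert p q
    decide
  have hS : (Finset.univ.filter fun t => (a + b) t ≠ 0) = (A ∪ B) \ (A ∩ B) := by
    ext t
    simp only [hAdef, hBdef, Finset.mem_filter, Finset.mem_sdiff, Finset.mem_union,
      Finset.mem_inter, Finset.mem_univ, true_and, Pi.add_apply]
    generalize a t = p
    generalize b t = q
    revert p q
    decide
  have hABw : ((A ∪ B) \ (A ∩ B)).card = 4 := by
    rw [← hS]; exact hweight _ (V.add_mem ha hb) hab0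
  have hsub : A ∩ B ⊆ A ∪ B := Finset.inter_subset_union
  have hsd : ((A ∪ B) \ (A ∩ B)).card = (A ∪ B).card - (A ∩ B).card :=
    Finset.card_sdiff_of_subset hsub
  have hle : (A ∩ B).card ≤ (A ∪ B).card := Finset.card_le_card hsub
  have h8 : (A ∪ B).card + (A ∩ B).card = 8 := by
    rw [Finset.card_union_add_card_inter, hA, hB]
  have hU : (A ∪ B).card = 6 := by omega
  have hsubc : A ∪ B ⊆ ({i, j} : Finset (Fin 7))ᶜ := by
    intro t ht
    simp only [Finset.mem_compl, Finset.mem_insert, Finset.mem_singleton]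
    rintro (rfl | rfl) <;>
      simp only [hAdef, hBdef, Finset.mem_union, Finset.mem_filter, Finset.mem_univ,
        true_and] at ht <;>
      tauto
  have hc : (({i, j} : Finset (Fin 7))ᶜ).card = 5 := by
    rw [Finset.card_compl, Finset.card_insert_of_notMem (by simp [hij]),
      Finset.card_singleton]
    simp
  have := Finset.card_le_card hsubc
  omega

/-- Any linear functional on a 3-dimensional binary code kills two distinct
nonzero vectors. -/
lemma exists_two_in_ker (V : Submodule (ZMod 2) (Fin 7 → ZMod 2))
    (hdim : Module.finrank (ZMod 2) V = 3) (f : V →ₗ[ZMod 2] ZMod 2) :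
    ∃ a b : V, a ≠ 0 ∧ b ≠ 0 ∧ a ≠ b ∧ f a = 0 ∧ f b = 0 := by
  have h1 : Module.finrank (ZMod 2) (LinearMap.range f) +
      Module.finrank (ZMod 2) (LinearMap.ker f) = 3 := by
    rw [f.finrank_range_add_finrank_ker, hdim]
  have h2 : Module.finrank (ZMod 2) (LinearMap.range f) ≤ 1 := by
    have := Submodule.finrank_le (LinearMap.range f)
    simpa using this
  have h3 : 2 ≤ Module.finrank (ZMod 2) (LinearMap.ker f) := by omega
  have h0 : 0 < Module.finrank (ZMod 2) (LinearMap.ker f) := by omega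
  have h1' : 1 < Module.finrank (ZMod 2) (LinearMap.ker f) := by omega
  let B := Module.finBasis (ZMod 2) (LinearMap.ker f)
  set a : LinearMap.ker f := B ⟨0, h0⟩ with hadef
  set b : LinearMap.ker f := B ⟨1, h1'⟩ with hbdef
  refine ⟨a.1, b.1, ?_, ?_, ?_, a.2, b.2⟩
  · exact fun h => B.ne_zero ⟨0, h0⟩ (Subtype.ext h)
  · exact fun h => B.ne_zero ⟨1, h1'⟩ (Subtype.ext h)
  · intro h
    have hab : a = b := Subtype.ext h
    rw [hadef, hbdef] at hab
    have := B.injective hab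
    simp at this

/-- Let `V` be a binary linear code of length 7 and dimension 3 in which every nonzero
codeword has weight 4 (a simplex/Hamming-type code).  Then the coordinates of `V` can be
put in bijection with the nonzero vectors of `𝔽₂³` in such a way that three distinct
indices `i₁, i₂, i₃` support a nonzero codeword vanishing at all three if and only if the
corresponding vectors of `𝔽₂³` are linearly dependent. -/
theorem simplex_code_coordinates_fano
    (V : Submodule (ZMod 2) (Fin 7 → ZMod 2))
    (hdim : Module.finrank (ZMod 2) V = 3)
    (hweight : ∀ v ∈ V, v ≠ 0 → codeWeight v = 4) :
    ∃ φ : Fin 7 → (Fin 3 → ZMod 2),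
      Function.Injective φ ∧ (∀ i, φ i ≠ 0) ∧
      ∀ i₁ i₂ i₃ : Fin 7, i₁ ≠ i₂ → i₁ ≠ i₃ → i₂ ≠ i₃ →
        ((∃ v ∈ V, v ≠ 0 ∧ v i₁ = 0 ∧ v i₂ = 0 ∧ v i₃ = 0) ↔
          ¬ LinearIndependent (ZMod 2) ![φ i₁, φ i₂, φ i₃]) := by
  classical
  let b : Module.Basis (Fin 3) (ZMod 2) V := Module.finBasisOfFinrankEq (ZMod 2) V hdim
  set φ : Fin 7 → (Fin 3 → ZMod 2) := fun t k => ((b k : Fin 7 → ZMod 2)) t with hφ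
  -- evaluation formula for combinations of the basis
  have heval : ∀ (c : Fin 3 → ZMod 2) (t : Fin 7),
      ((∑ k, c k • b k : V) : Fin 7 → ZMod 2) t = ∑ k, c k * φ t k := by
    intro c t
    rw [AddSubmonoidClass.coe_finset_sum, Finset.sum_apply]
    simp [hφ]
  -- representation of arbitrary elements
  have hrepr : ∀ (v : Fin 7 → ZMod 2) (hv : v ∈ V) (t : Fin 7),
      v t = ∑ k, (b.repr ⟨v, hv⟩) k * φ t k := by
    intro v hv t
    have hsr := b.sum_repr ⟨v, hv⟩
    conv_lhs => rw [show v = ((⟨v, hv⟩ : V) : Fin 7 → ZMod 2) from rfl, ← hsr]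
    exact heval _ t
  -- combinations with nonzero coefficients are nonzero
  have hnz : ∀ c : Fin 3 → ZMod 2, c ≠ 0 → ((∑ k, c k • b k : V) : Fin 7 → ZMod 2) ≠ 0 := by
    intro c hc h
    apply hc
    have h0 : (∑ k, c k • b k : V) = 0 := Subtype.ext h
    funext k
    exact Fintype.linearIndependent_iff.mp b.linearIndependent c h0 k
  refine ⟨φ, ?_, ?_, ?_⟩
  · -- injectivity
    intro i j hphi
    by_contra hne
    have hsame : ∀ v ∈ V, v i = v j := by
      intro v hv
      rw [hrepr v hv i, hrepr v hv j]
      exact Finset.sum_congr rfl fun k _ => by rw [congrFun hphi k]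
    set f : V →ₗ[ZMod 2] ZMod 2 :=
      (LinearMap.proj i : (Fin 7 → ZMod 2) →ₗ[ZMod 2] ZMod 2).comp V.subtype with hf
    obtain ⟨x, y, hx0, hy0, hxy, hxi, hyi⟩ := exists_two_in_ker V hdim f
    have hxi' : (x : Fin 7 → ZMod 2) i = 0 := hxi
    have hyi' : (y : Fin 7 → ZMod 2) i = 0 := hyi
    exact core_no_two V hweight hne x.2 y.2
      (fun h => hx0 (Subtype.ext h)) (fun h => hy0 (Subtype.ext h))
      (fun h => hxy (Subtype.ext h))
      hxi' (by rw [← hsame x.1 x.2]; exact hxi')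
      hyi' (by rw [← hsame y.1 y.2]; exact hyi')
  · -- nonvanishing
    intro i hi
    have hvanish : ∀ v ∈ V, v i = 0 := by
      intro v hv
      rw [hrepr v hv i]
      apply Finset.sum_eq_zero
      intro k _
      rw [congrFun hi k, Pi.zero_apply, mul_zero]
    set j : Fin 7 := if i = 0 then 1 else 0 with hj
    have hij : i ≠ j := by
      by_cases h : i = 0
      · rw [hj, if_pos h, h]; decide
      · rw [hj, if_neg h]; exact h
    set f : V →ₗ[ZMod 2] ZMod 2 :=
      (LinearMap.proj j : (Fin 7 → ZMod 2) →ₗ[ZMod 2] ZMod 2).comp V.subtype with hf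
    obtain ⟨x, y, hx0, hy0, hxy, hxj, hyj⟩ := exists_two_in_ker V hdim f
    have hxj' : (x : Fin 7 → ZMod 2) j = 0 := hxj
    have hyj' : (y : Fin 7 → ZMod 2) j = 0 := hyj
    exact core_no_two V hweight hij x.2 y.2
      (fun h => hx0 (Subtype.ext h)) (fun h => hy0 (Subtype.ext h))
      (fun h => hxy (Subtype.ext h))
      (hvanish x.1 x.2) hxj' (hvanish y.1 y.2) hyj'
  · -- the Fano condition
    intro i₁ i₂ i₃ _ _ _
    rw [dep_iff_ortho]
    constructor
    · rintro ⟨v, hv, hv0, h1, h2, h3⟩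
      refine ⟨fun k => (b.repr ⟨v, hv⟩) k, ?_, ?_, ?_, ?_⟩
      · intro h0
        apply hv0
        funext t
        rw [hrepr v hv t]
        apply Finset.sum_eq_zero
        intro k _
        rw [show (b.repr ⟨v, hv⟩) k = 0 from congrFun h0 k, zero_mul]
      · exact (hrepr v hv i₁).symm.trans h1
      · exact (hrepr v hv i₂).symm.trans h2
      · exact (hrepr v hv i₃).symm.trans h3
    · rintro ⟨c, hc, h1, h2, h3⟩
      refine ⟨((∑ k, c k • b k : V) : Fin 7 → ZMod 2), (∑ k, c k • b k : V).2,
        hnz c hc, ?_, ?_, ?_⟩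
      · exact (heval c i₁).trans h1
      · exact (heval c i₂).trans h2
      · exact (heval c i₃).trans h3
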